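/- arXiv:1909.04650 — 6 statements merged into one kernel-verified Lean document; each statement's English description precedes it below -/
import Mathlib

section
/- For every partition x ∈ P_n and every u ∈ ℤ^n_{≥0}, the monomial e^u = e_1^{u_1}⋯e_n^{u_n} belongs to the ideal I_x if and only if there exists a permutation σ ∈ S_n with u_{σ(i)} ≥ x_i for all i = 1,…,n (equivalently, the weakly decreasing rearrangement of u dominates x componentwise). -/
open MvPolynomial

/-- `PartitionOn n x` : `x` is a weakly decreasing sequence of naturals (0-based
indexing, so `x 0` is the first part `x_1`) vanishing from index `n` on; this
encodes a partition in `P_n ⊆ ℤ^n_{≥0}`. -/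
def PartitionOn (n : ℕ) (x : ℕ → ℕ) : Prop :=
  (∀ i j : ℕ, i ≤ j → x j ≤ x i) ∧ ∀ i : ℕ, n ≤ i → x i = 0

/-- A partition: a weakly decreasing, eventually zero sequence of naturals. -/
def IsPartitionF (x : ℕ → ℕ) : Prop :=
  (∀ i j : ℕ, i ≤ j → x j ≤ x i) ∧ ∃ n : ℕ, ∀ i : ℕ, n ≤ i → x i = 0

/-- The conjugate partition (1-based index): `conj x i = #{j : x_j ≥ i}`. -/
noncomputable def conj (x : ℕ → ℕ) (i : ℕ) : ℕ :=
  Set.ncard { j : ℕ | i ≤ x j }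

/-- The truncation `x(c)`, whose parts are `min (x i) c`. -/
def trunc (x : ℕ → ℕ) (c : ℕ) : ℕ → ℕ := fun i => min (x i) c

/-- The rectangular partition `(b^a)`: `a` parts equal to `b`. -/
def rect (a b : ℕ) : ℕ → ℕ := fun i => if i < a then b else 0

/-- The size `|x| = x_1 + ⋯ + x_n` of a partition supported in the first `n` indices. -/
def psize (n : ℕ) (x : ℕ → ℕ) : ℕ := ∑ i ∈ Finset.range n, x i

/-- The set `Z(X)` : pairs `(z, l)` with `z ∈ P_n`, `l ≥ 0` such that, writing `c = z_1`:
(1) there is `x ∈ X` with `x(c) ≤ z` and `x'_{c+1} ≤ l+1`, and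
(2) every `x ∈ X` with `x(c) ≤ z` and `x'_{c+1} ≤ l+1` has `x'_{c+1} = l+1`. -/
noncomputable def ZX (n : ℕ) (X : Set (ℕ → ℕ)) : Set ((ℕ → ℕ) × ℕ) :=
  { zl | PartitionOn n zl.1 ∧
    (∃ x ∈ X, trunc x (zl.1 0) ≤ zl.1 ∧ conj x (zl.1 0 + 1) ≤ zl.2 + 1) ∧
    ∀ x ∈ X, trunc x (zl.1 0) ≤ zl.1 → conj x (zl.1 0 + 1) ≤ zl.2 + 1 →
      conj x (zl.1 0 + 1) = zl.2 + 1 }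

/-- The monomial `e^u = e_1^{u_1} ⋯ e_n^{u_n}` in `S = k[e_1, …, e_n]`. -/
noncomputable def mon (k : Type*) [Field k] (n : ℕ) (u : ℕ → ℕ) : MvPolynomial (Fin n) k :=
  ∏ i : Fin n, (X i : MvPolynomial (Fin n) k) ^ u (i : ℕ)

/-- The ideal `I_x` generated by the `S_n`-orbit of the monomial `e^x`. -/
noncomputable def Ipart (k : Type*) [Field k] (n : ℕ) (x : ℕ → ℕ) :
    Ideal (MvPolynomial (Fin n) k) :=
  Ideal.span { f | ∃ σ : Equiv.Perm (Fin n),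
    f = ∏ i : Fin n, (X i : MvPolynomial (Fin n) k) ^ x ((σ i : Fin n) : ℕ) }

/-- The ideal `I_X = Σ_{x ∈ X} I_x`. -/
noncomputable def IXset (k : Type*) [Field k] (n : ℕ) (Xs : Set (ℕ → ℕ)) :
    Ideal (MvPolynomial (Fin n) k) :=
  ⨆ x ∈ Xs, Ipart k n x

/-- `succ(z,l) = {x ∈ P_n : x ≥ z and x_i > z_i for some i > l}` (1-based `i > l`
corresponds to 0-based index `≥ l`). -/
def succSet (n l : ℕ) (z : ℕ → ℕ) : Set (ℕ → ℕ) :=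
  { x | PartitionOn n x ∧ (∀ i, z i ≤ x i) ∧ ∃ i, l ≤ i ∧ z i < x i }

/-- `Y_{z,l} = {((z_1+1)^{l+1})} ∪ {((z_i+1)^i) : l+1 < i ≤ n, z_{i-1} > z_i}`
(here `i = m+2` in 1-based indexing). -/
def Yset (n : ℕ) (z : ℕ → ℕ) (l : ℕ) : Set (ℕ → ℕ) :=
  {rect (l+1) (z 0 + 1)} ∪
    { y | ∃ m : ℕ, l ≤ m ∧ m + 2 ≤ n ∧ z (m+1) < z m ∧ y = rect (m+2) (z (m+1) + 1) }

/-- `Y'_{z,l} = {((z_i+1)^i) : l+1 < i ≤ n, z_{i-1} > z_i}`. -/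
def Y'set (n : ℕ) (z : ℕ → ℕ) (l : ℕ) : Set (ℕ → ℕ) :=
  { y | ∃ m : ℕ, l ≤ m ∧ m + 2 ≤ n ∧ z (m+1) < z m ∧ y = rect (m+2) (z (m+1) + 1) }

/-- An ideal `I` is symmetric shifted if for every monomial `e^x ∈ I` with `x ∈ P_n`
and every `1 < k ≤ n` (0-based `0 < j < n`) with `x_1 > x_k`, one has `e^x · e_k/e_1 ∈ I`. -/
def SymShifted (k : Type*) [Field k] (n : ℕ) (I : Ideal (MvPolynomial (Fin n) k)) : Prop :=
  ∀ x : ℕ → ℕ, PartitionOn n x → mon k n x ∈ I →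
    ∀ j : ℕ, 0 < j → j < n → x j < x 0 →
      mon k n (fun i => if i = 0 then x 0 - 1 else if i = j then x j + 1 else x i) ∈ I

/-- The partitioning problem `BP(d, C; w)` is `r`-feasible: the multiset of `d` copies of
each of `w_1, …, w_n` (balls indexed by `Fin d × Fin n`, ball `(j,i)` of weight `w_i`)
can be distributed into bins `B_1, …, B_n` of exactly `d` balls each so that
`w(B_i) ≤ C_i` for all `i = r+1, …, n` (0-based bins `≥ r`). -/
def RFeasible (n d r : ℕ) (C w : ℕ → ℕ) : Prop :=
  ∃ A : Fin d × Fin n → Fin n,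
    (∀ b : Fin n, (Finset.univ.filter fun p => A p = b).card = d) ∧
    ∀ b : Fin n, r ≤ (b : ℕ) →
      (∑ p ∈ Finset.univ.filter (fun p => A p = b), w ((p.2 : Fin n) : ℕ)) ≤ C (b : ℕ)

/-- `X_w^d = {x ∈ P_n : x = σ_1(w) + ⋯ + σ_d(w) for some σ_1, …, σ_d ∈ S_n}`. -/
def XwPow (n d : ℕ) (w : ℕ → ℕ) : Set (ℕ → ℕ) :=
  { x | PartitionOn n x ∧ ∃ σ : Fin d → Equiv.Perm (Fin n),
      ∀ i : Fin n, x (i : ℕ) = ∑ j : Fin d, w ((σ j i : Fin n) : ℕ) }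

/-- `Y_n`: the elements of `Y` with at most `n` nonzero parts, regarded in `P_n`. -/
def restr (Y : Set (ℕ → ℕ)) (n : ℕ) : Set (ℕ → ℕ) :=
  { x ∈ Y | ∀ i, n ≤ i → x i = 0 }


lemma prod_X_pow_univ {k : Type*} [Field k] (n : ℕ) (f : Fin n → ℕ) :
    ∏ i : Fin n, (X i : MvPolynomial (Fin n) k) ^ f i =
      monomial (Finsupp.equivFunOnFinite.symm f) 1 := by
  rw [← prod_X_pow_eq_monomial]
  refine (Finset.prod_subset (Finset.subset_univ _) ?_).symm
  intro i _ hi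
  simp only [Finsupp.mem_support_iff, ne_eq, not_not] at hi
  simp only [Finsupp.coe_equivFunOnFinite_symm] at hi ⊢
  rw [hi, pow_zero]

theorem stmt_0 {k : Type*} [Field k] (n : ℕ) (x : ℕ → ℕ) (hx : PartitionOn n x)
    (u : ℕ → ℕ) (hu : ∀ i, n ≤ i → u i = 0) :
    mon k n u ∈ Ipart k n x ↔
      ∃ σ : Equiv.Perm (Fin n), ∀ i : Fin n, x (i : ℕ) ≤ u ((σ i : Fin n) : ℕ) := by
  classical
  have key : ∀ g : Fin n → ℕ, (∏ i : Fin n, (X i : MvPolynomial (Fin n) k) ^ g i) =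
      monomial (Finsupp.equivFunOnFinite.symm g) 1 := fun g => prod_X_pow_univ n g
  have hI : Ipart k n x = Ideal.span ((fun s => monomial s (1 : k)) ''
      { d | ∃ σ : Equiv.Perm (Fin n),
        d = Finsupp.equivFunOnFinite.symm (fun i => x ((σ i : Fin n) : ℕ)) }) := by
    unfold Ipart
    congr 1
    ext f
    constructor
    · rintro ⟨σ, rfl⟩
      exact ⟨_, ⟨σ, rfl⟩, (key _).symm⟩
    · rintro ⟨d, ⟨σ, rfl⟩, rfl⟩
      exact ⟨σ, (key _).symm⟩
  have hmon : mon k n u = monomial (Finsupp.equivFunOnFinite.symm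
      (fun i : Fin n => u (i : ℕ))) 1 := key _
  rw [hI, hmon, ← hmon]
  rw [hmon, mem_ideal_span_monomial_image]
  have hsupp : (monomial (Finsupp.equivFunOnFinite.symm
      (fun i : Fin n => u (i : ℕ))) (1 : k)).support =
      {Finsupp.equivFunOnFinite.symm (fun i : Fin n => u (i : ℕ))} :=
    by rw [support_monomial]; exact if_neg one_ne_zero
  rw [hsupp]
  simp only [Finset.mem_singleton, forall_eq, Set.mem_setOf_eq]
  constructor
  · rintro ⟨d, ⟨σ, rfl⟩, hle⟩
    refine ⟨σ⁻¹, fun i => ?_⟩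
    have := hle (σ⁻¹ i)
    simpa using this
  · rintro ⟨σ, hσ⟩
    refine ⟨_, ⟨σ⁻¹, rfl⟩, fun i => ?_⟩
    have := hσ (σ⁻¹ i)
    simpa using this
end

section
/- Let X ⊆ P_n and 1 ≤ p ≤ n. Define X^{:p} = {x(c) : x ∈ X, c ∈ ℤ_{≥0}, x'_{c+1} ≤ p, and x'_c > p whenever c > 0}. Then the saturation I_X : I_p^∞ equals I_{X^{:p}}, where I_p = I_{(1^p)} is the ideal generated by all square-free monomials of degree p and I : J^∞ = ∪_{d≥0} (I : J^d). -/
open MvPolynomial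

section Aux

variable {k : Type*} [Field k] {n : ℕ}

/-- monomial with coefficient 1 from a function exponent -/
noncomputable def Mf (k : Type*) [Field k] (n : ℕ) (g : Fin n → ℕ) : MvPolynomial (Fin n) k :=
  monomial (Finsupp.equivFunOnFinite.symm g) 1

lemma prodX_eq (g : Fin n → ℕ) :
    (∏ i : Fin n, (X i : MvPolynomial (Fin n) k) ^ g i) = Mf k n g := by
  rw [Mf, monomial_eq, C_1, one_mul, Finsupp.prod_fintype]
  · simp
  · intro i; exact pow_zero _

lemma Mf_mul (g g' : Fin n → ℕ) :
    (Mf k n g) * Mf k n g' = Mf k n (fun i => g i + g' i) := by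
  have h : Finsupp.equivFunOnFinite.symm g + Finsupp.equivFunOnFinite.symm g'
      = Finsupp.equivFunOnFinite.symm (fun i => g i + g' i) := by ext i; simp
  rw [Mf, Mf, Mf, monomial_mul, one_mul, h]

lemma Mf_pow (g : Fin n → ℕ) (d : ℕ) :
    (Mf k n g) ^ d = Mf k n (fun i => d * g i) := by
  have h : d • Finsupp.equivFunOnFinite.symm g
      = Finsupp.equivFunOnFinite.symm (fun i => d * g i) := by ext i; simp [mul_comm]
  rw [Mf, Mf, monomial_pow, one_pow, h]

lemma Mf_one : Mf k n (fun _ => 0) = 1 := by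
  have : (Finsupp.equivFunOnFinite.symm (fun _ : Fin n => (0:ℕ))) = 0 := by ext i; simp
  rw [Mf, this, monomial_zero', C_1]

/-- counting over `Fin n` equals counting over `range n` -/
lemma card_filter_fin (P : ℕ → Prop) [DecidablePred P] :
    (Finset.univ.filter fun i : Fin n => P (i : ℕ)).card
      = ((Finset.range n).filter P).card := by
  rw [Finset.card_filter, Finset.card_filter, Fin.sum_univ_eq_sum_range (fun m => if P m then 1 else 0) n]

/-- reindexing a count by a permutation -/
lemma card_filter_perm (σ : Equiv.Perm (Fin n)) (Q : Fin n → Prop) [DecidablePred Q] :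
    (Finset.univ.filter fun i : Fin n => Q (σ i)).card
      = (Finset.univ.filter Q).card := by
  apply Finset.card_bij (fun i _ => σ i)
  · intro a ha; simp only [Finset.mem_filter, Finset.mem_univ, true_and] at ha ⊢; exact ha
  · intro a _ b _ h; exact σ.injective h
  · intro b hb
    refine ⟨σ.symm b, ?_, by simp⟩
    simp only [Finset.mem_filter, Finset.mem_univ, true_and] at hb ⊢
    simpa using hb

end Aux
section Aux2

variable {k : Type*} [Field k] {n : ℕ}

/-- If the counting function of `u` dominates that of the partition `y`,
then `u` dominates a permutation of `y`. -/
lemma exists_perm_le (y : ℕ → ℕ) (hy : ∀ i j : ℕ, i ≤ j → y j ≤ y i) (u : Fin n → ℕ)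
    (h : ∀ v : ℕ, 1 ≤ v →
      (Finset.univ.filter fun j : Fin n => v ≤ y (j : ℕ)).card
        ≤ (Finset.univ.filter fun i : Fin n => v ≤ u i).card) :
    ∃ σ : Equiv.Perm (Fin n), ∀ i : Fin n, y ((σ i : Fin n) : ℕ) ≤ u i := by
  classical
  set ρ := Tuple.sort u with hρ
  have hmono : Monotone (u ∘ ρ) := Tuple.monotone_sort u
  have key : ∀ j : Fin n, y ((Fin.rev j : Fin n) : ℕ) ≤ u (ρ j) := by
    intro j
    set v := y ((Fin.rev j : Fin n) : ℕ) with hv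
    rcases Nat.eq_zero_or_pos v with h0 | hpos
    · omega
    by_contra hlt
    push_neg at hlt
    have hj : (j : ℕ) < n := j.isLt
    have hrev : ((Fin.rev j : Fin n) : ℕ) = n - ((j:ℕ) + 1) := Fin.val_rev j
    -- card of {j' | v ≤ y j'} is at least n - j
    have h1 : n - (j : ℕ) ≤ (Finset.univ.filter fun j' : Fin n => v ≤ y (j' : ℕ)).card := by
      have hsub : (Finset.univ.filter fun j' : Fin n => (j' : ℕ) ≤ ((Fin.rev j : Fin n) : ℕ))
          ⊆ Finset.univ.filter fun j' : Fin n => v ≤ y (j' : ℕ) := by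
        intro a ha
        simp only [Finset.mem_filter, Finset.mem_univ, true_and] at ha ⊢
        rw [hv]
        exact hy _ _ ha
      refine le_trans ?_ (Finset.card_le_card hsub)
      rw [card_filter_fin (fun m => m ≤ ((Fin.rev j : Fin n) : ℕ))]
      have heq : ((Finset.range n).filter fun m => m ≤ ((Fin.rev j : Fin n) : ℕ))
          = Finset.range (((Fin.rev j : Fin n) : ℕ) + 1) := by
        ext m
        simp only [Finset.mem_filter, Finset.mem_range]
        omega
      rw [heq, Finset.card_range]
      omega
    have h2 := h v hpos
    have h3 : (Finset.univ.filter fun i : Fin n => v ≤ u i)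
        ⊆ (Finset.univ.filter fun j'' : Fin n => j < j'').image ρ := by
      intro i hi
      simp only [Finset.mem_filter, Finset.mem_univ, true_and] at hi
      rw [Finset.mem_image]
      refine ⟨ρ.symm i, ?_, by simp⟩
      simp only [Finset.mem_filter, Finset.mem_univ, true_and]
      by_contra hle
      push_neg at hle
      have hm : u (ρ (ρ.symm i)) ≤ u (ρ j) := hmono hle
      simp only [Equiv.apply_symm_apply] at hm
      omega
    have h4 : ((Finset.univ.filter fun j'' : Fin n => j < j'').image ρ).card
        ≤ n - ((j : ℕ) + 1) := by
      refine le_trans (Finset.card_image_le) ?_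
      have heq1 : (Finset.univ.filter fun j'' : Fin n => j < j'')
          = Finset.univ.filter fun j'' : Fin n => (j : ℕ) + 1 ≤ (j'' : ℕ) := by
        ext a
        simp only [Finset.mem_filter, Finset.mem_univ, true_and, Fin.lt_def]
        omega
      rw [heq1, card_filter_fin (fun m => (j : ℕ) + 1 ≤ m)]
      have heq2 : ((Finset.range n).filter fun m => (j : ℕ) + 1 ≤ m)
          = Finset.Ico ((j : ℕ) + 1) n := by
        ext m
        simp only [Finset.mem_filter, Finset.mem_range, Finset.mem_Ico]
        omega
      rw [heq2, Nat.card_Ico]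
    have h5 := le_trans h2 (le_trans (Finset.card_le_card h3) h4)
    omega
  refine ⟨ρ.symm.trans Fin.revPerm, fun i => ?_⟩
  have h := key (ρ.symm i)
  rw [Equiv.apply_symm_apply] at h
  exact h

end Aux2
section Aux3

variable {k : Type*} [Field k] {n : ℕ}

lemma conj_eq_card (x : ℕ → ℕ) (hx : PartitionOn n x) (v : ℕ) (hv : 1 ≤ v) :
    conj x v = (Finset.univ.filter fun j : Fin n => v ≤ x (j : ℕ)).card := by
  rw [card_filter_fin (fun m => v ≤ x m)]
  rw [conj]
  have hset : { j : ℕ | v ≤ x j } = ↑((Finset.range n).filter fun m => v ≤ x m) := by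
    ext j
    simp only [Set.mem_setOf_eq, Finset.coe_filter, Finset.mem_range, Set.mem_setOf_eq]
    constructor
    · intro hj
      refine ⟨?_, hj⟩
      by_contra hn
      push_neg at hn
      rw [hx.2 j hn] at hj
      omega
    · exact fun h => h.2
  rw [hset, Set.ncard_coe_finset]

/-- dominating monomials lie in `Ipart` -/
lemma mem_Ipart_of_le (x : ℕ → ℕ) (u : Fin n → ℕ)
    (h : ∃ σ : Equiv.Perm (Fin n), ∀ i : Fin n, x ((σ i : Fin n) : ℕ) ≤ u i) :
    Mf k n u ∈ Ipart k n x := by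
  obtain ⟨σ, hσ⟩ := h
  have hgen : Mf k n (fun i => x ((σ i : Fin n) : ℕ)) ∈ Ipart k n x :=
    Ideal.subset_span ⟨σ, (prodX_eq _).symm⟩
  have key : Mf k n (fun i => u i - x ((σ i : Fin n) : ℕ)) * Mf k n (fun i => x ((σ i : Fin n) : ℕ))
      = Mf k n u := by
    rw [Mf_mul]
    congr 1
    funext i
    have := hσ i
    omega
  rw [← key]
  exact Ideal.mul_mem_left _ _ hgen

lemma Ipart_le_IXset (Xs : Set (ℕ → ℕ)) (x : ℕ → ℕ) (hx : x ∈ Xs) :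
    Ipart k n x ≤ IXset k n Xs := by
  rw [IXset]
  exact le_iSup₂ (f := fun x (_ : x ∈ Xs) => Ipart k n x) x hx

/-- membership criterion for `IXset` -/
lemma mem_IXset_iff (Xs : Set (ℕ → ℕ)) (f : MvPolynomial (Fin n) k) :
    f ∈ IXset k n Xs ↔ ∀ u ∈ f.support, ∃ x ∈ Xs, ∃ σ : Equiv.Perm (Fin n),
      ∀ i : Fin n, x ((σ i : Fin n) : ℕ) ≤ u i := by
  classical
  constructor
  · intro hf
    have hspan : IXset k n Xs = Ideal.span (⋃ x ∈ Xs, { g | ∃ σ : Equiv.Perm (Fin n),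
        g = ∏ i : Fin n, (X i : MvPolynomial (Fin n) k) ^ x ((σ i : Fin n) : ℕ) }) := by
      rw [IXset]
      simp_rw [Ipart]
      exact (Submodule.span_iUnion₂ _).symm
    rw [hspan] at hf
    induction hf using Submodule.span_induction with
    | mem g hg =>
      simp only [Set.mem_iUnion] at hg
      obtain ⟨x, hx, σ, rfl⟩ := hg
      intro u hu
      rw [prodX_eq, Mf, support_monomial, if_neg one_ne_zero, Finset.mem_singleton] at hu
      subst hu
      exact ⟨x, hx, σ, fun i => by simp⟩
    | zero => intro u hu; simp at hu
    | add a b _ _ ha hb =>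
      intro u hu
      rcases Finset.mem_union.mp (MvPolynomial.support_add hu) with h | h
      · exact ha u h
      · exact hb u h
    | smul a g _ hg =>
      intro u hu
      rw [smul_eq_mul] at hu
      have := MvPolynomial.support_mul a g hu
      rw [Finset.mem_add] at this
      obtain ⟨u1, hu1, u2, hu2, rfl⟩ := this
      obtain ⟨x, hx, σ, hσ⟩ := hg u2 hu2
      exact ⟨x, hx, σ, fun i => le_trans (hσ i) (by simp)⟩
  · intro h
    rw [← MvPolynomial.support_sum_monomial_coeff f]
    refine Ideal.sum_mem _ fun u hu => ?_
    obtain ⟨x, hx, σ, hσ⟩ := h u hu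
    have hm : (monomial u (coeff u f) : MvPolynomial (Fin n) k)
        = C (coeff u f) * Mf k n (fun i => u i) := by
      rw [Mf, Finsupp.equivFunOnFinite_symm_coe, C_mul_monomial, mul_one]
    rw [hm]
    exact Ideal.mul_mem_left _ _ (Ipart_le_IXset Xs x hx (mem_Ipart_of_le x _ ⟨σ, hσ⟩))

end Aux3
section Aux4

variable {k : Type*} [Field k] {n p : ℕ}

lemma card_lt_p (hpn : p ≤ n) :
    (Finset.univ.filter fun i : Fin n => (i : ℕ) < p).card = p := by
  rw [card_filter_fin (fun m => m < p)]
  have : ((Finset.range n).filter fun m => m < p) = Finset.range p := by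
    ext m
    simp only [Finset.mem_filter, Finset.mem_range]
    omega
  rw [this, Finset.card_range]

lemma exists_perm_indicator (hpn : p ≤ n) (S : Finset (Fin n)) (hS : S.card = p) :
    ∃ σ : Equiv.Perm (Fin n), ∀ i : Fin n, (((σ i : Fin n) : ℕ) < p ↔ i ∈ S) := by
  classical
  have hc1 : Fintype.card {i : Fin n // i ∈ S} = Fintype.card {i : Fin n // (i : ℕ) < p} := by
    rw [Fintype.card_coe, hS, Fintype.card_subtype, card_lt_p hpn]
  let e1 : {i : Fin n // i ∈ S} ≃ {i : Fin n // (i : ℕ) < p} := Fintype.equivOfCardEq hc1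
  refine ⟨e1.extendSubtype, fun i => ?_⟩
  constructor
  · intro hlt
    by_contra h
    exact Equiv.extendSubtype_not_mem e1 i h hlt
  · intro h
    exact Equiv.extendSubtype_mem e1 i h

/-- exponent vectors of products of `d` squarefree degree-`p` monomials -/
def WdP (n p d : ℕ) (w : Fin n → ℕ) : Prop :=
  ∃ S : Fin d → Finset (Fin n), (∀ t, (S t).card = p) ∧
    ∀ i, w i = ∑ t : Fin d, if i ∈ S t then 1 else 0

lemma WdP_sum {d : ℕ} {w : Fin n → ℕ} (hw : WdP n p d w) :
    (∑ i : Fin n, w i) = d * p ∧ ∀ i, w i ≤ d := by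
  classical
  obtain ⟨S, hcard, hsum⟩ := hw
  constructor
  · have h1 : (∑ i : Fin n, w i) = ∑ i : Fin n, ∑ t : Fin d, (if i ∈ S t then 1 else 0) :=
      Finset.sum_congr rfl fun i _ => hsum i
    have h2 : ∀ t : Fin d, (∑ i : Fin n, (if i ∈ S t then 1 else 0)) = p := by
      intro t
      rw [Finset.sum_ite_mem, Finset.univ_inter]
      simp [hcard t]
    rw [h1, Finset.sum_comm]
    simp only [h2]
    simp [mul_comm]
  · intro i
    rw [hsum i]
    have := Finset.sum_le_card_nsmul Finset.univ (fun t : Fin d => if i ∈ S t then 1 else 0) 1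
      (fun t _ => by split <;> omega)
    simpa using this

lemma pow_rect_le_span (hpn : p ≤ n) (d : ℕ) :
    Ipart k n (rect p 1) ^ d ≤
      Ideal.span { m : MvPolynomial (Fin n) k | ∃ w : Fin n → ℕ, WdP n p d w ∧ m = Mf k n w } := by
  classical
  induction d with
  | zero =>
    rw [pow_zero, Ideal.one_eq_top]
    intro a _
    have h1 : (1 : MvPolynomial (Fin n) k) ∈ Ideal.span { m : MvPolynomial (Fin n) k |
        ∃ w : Fin n → ℕ, WdP n p 0 w ∧ m = Mf k n w } := by
      refine Ideal.subset_span ⟨fun _ => 0, ⟨Fin.elim0, fun t => t.elim0, fun i => by simp⟩, ?_⟩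
      rw [Mf_one]
    simpa using Ideal.mul_mem_left _ a h1
  | succ d ih =>
    rw [pow_succ]
    calc Ipart k n (rect p 1) ^ d * Ipart k n (rect p 1)
        ≤ Ideal.span { m : MvPolynomial (Fin n) k | ∃ w, WdP n p d w ∧ m = Mf k n w } *
          Ipart k n (rect p 1) := Ideal.mul_mono ih le_rfl
      _ ≤ _ := by
        rw [Ideal.mul_le]
        intro r hr s hs
        -- both are spans; use mul_le twice? instead: r in span, s in span
        -- use span_mul_span
        have : r * s ∈ Ideal.span { m : MvPolynomial (Fin n) k | ∃ w, WdP n p d w ∧ m = Mf k n w }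
            * Ipart k n (rect p 1) := Ideal.mul_mem_mul hr hs
        rw [Ipart, Ideal.span_mul_span] at this
        refine Ideal.span_le.mpr ?_ this
        rintro z hz
        rw [Set.mem_mul] at hz
        obtain ⟨a, ⟨w, hw, rfl⟩, b, ⟨τ, rfl⟩, hz⟩ := hz
        subst hz
        obtain ⟨S, hcard, hsum⟩ := hw
        refine Ideal.subset_span ⟨fun i => w i + (if ((τ i : Fin n) : ℕ) < p then 1 else 0),
          ?_, ?_⟩
        · refine ⟨Fin.snoc S (Finset.univ.filter fun i : Fin n => ((τ i : Fin n) : ℕ) < p),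
            fun t => ?_, fun i => ?_⟩
          · induction t using Fin.lastCases with
            | last =>
              rw [Fin.snoc_last]
              rw [card_filter_perm τ (fun j : Fin n => (j : ℕ) < p)]
              exact card_lt_p hpn
            | cast t' =>
              rw [Fin.snoc_castSucc]
              exact hcard t'
          · rw [Fin.sum_univ_castSucc]
            simp only [Fin.snoc_castSucc, Fin.snoc_last]
            rw [← hsum i]
            congr 1
            simp [Finset.mem_filter]
        · rw [prodX_eq, Mf_mul]
          congr 1

end Aux4
section Aux5

variable {n p : ℕ}

lemma count_B (x : ℕ → ℕ) (hx : PartitionOn n x) (c : ℕ) (h1 : conj x (c + 1) ≤ p)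
    (w : Fin n → ℕ) (hw : WdP n p (n * x 0 + 1) w) (σ : Equiv.Perm (Fin n)) :
    ∀ v : ℕ, 1 ≤ v →
      (Finset.univ.filter fun j : Fin n => v ≤ x (j : ℕ)).card
        ≤ (Finset.univ.filter fun i : Fin n => v ≤ min (x ((σ i : Fin n) : ℕ)) c + w i).card := by
  classical
  intro v hv
  by_cases hvc : v ≤ c
  · rw [← card_filter_perm σ (fun j : Fin n => v ≤ x (j : ℕ))]
    refine Finset.card_le_card ?_
    intro i hi
    simp only [Finset.mem_filter, Finset.mem_univ, true_and] at hi ⊢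
    have : v ≤ min (x ((σ i : Fin n) : ℕ)) c := le_min hi hvc
    omega
  · push_neg at hvc
    by_cases hx0 : x 0 < v
    · have hempty : (Finset.univ.filter fun j : Fin n => v ≤ x (j : ℕ)) = ∅ := by
        refine Finset.filter_eq_empty_iff.mpr fun j _ => ?_
        have := hx.1 0 (j : ℕ) (Nat.zero_le _)
        omega
      simp [hempty]
    · push_neg at hx0
      have hA : (Finset.univ.filter fun j : Fin n => v ≤ x (j : ℕ)).card ≤ p := by
        have hsub : (Finset.univ.filter fun j : Fin n => v ≤ x (j : ℕ))
            ⊆ Finset.univ.filter fun j : Fin n => c + 1 ≤ x (j : ℕ) := by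
          intro j hj
          simp only [Finset.mem_filter, Finset.mem_univ, true_and] at hj ⊢
          omega
        refine le_trans (Finset.card_le_card hsub) ?_
        rw [← conj_eq_card x hx (c + 1) (by omega)]
        exact h1
      by_contra hB
      push_neg at hB
      obtain ⟨hS1, hS2⟩ := WdP_sum hw
      set B := Finset.univ.filter fun i : Fin n => v ≤ min (x ((σ i : Fin n) : ℕ)) c + w i with hBdef
      have hbp : B.card + 1 ≤ p := by omega
      obtain ⟨m, hm⟩ : ∃ m, x 0 = m + 1 := ⟨x 0 - 1, by omega⟩
      have hB1 : (∑ i ∈ B, w i) ≤ B.card * (n * (m + 1) + 1) := by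
        have := Finset.sum_le_card_nsmul B w (n * (m + 1) + 1)
          (fun i _ => by rw [← hm]; exact hS2 i)
        simpa [mul_comm] using this
      have hB2 : (∑ i ∈ Finset.univ.filter fun i : Fin n =>
          ¬ (v ≤ min (x ((σ i : Fin n) : ℕ)) c + w i), w i) ≤ n * m := by
        have hbound : ∀ i ∈ Finset.univ.filter fun i : Fin n =>
            ¬ (v ≤ min (x ((σ i : Fin n) : ℕ)) c + w i), w i ≤ m := by
          intro i hi
          simp only [Finset.mem_filter, Finset.mem_univ, true_and] at hi
          omega
        have h' := Finset.sum_le_card_nsmul _ w m hbound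
        have hcard : (Finset.univ.filter fun i : Fin n =>
            ¬ (v ≤ min (x ((σ i : Fin n) : ℕ)) c + w i)).card ≤ n := by
          refine le_trans (Finset.card_filter_le _ _) ?_
          simp
        calc (∑ i ∈ Finset.univ.filter fun i : Fin n =>
              ¬ (v ≤ min (x ((σ i : Fin n) : ℕ)) c + w i), w i)
            ≤ (Finset.univ.filter fun i : Fin n =>
              ¬ (v ≤ min (x ((σ i : Fin n) : ℕ)) c + w i)).card * m := by simpa [mul_comm] using h'
          _ ≤ n * m := Nat.mul_le_mul_right m hcard
      have htot : (∑ i ∈ B, w i) + (∑ i ∈ Finset.univ.filter fun i : Fin n =>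
          ¬ (v ≤ min (x ((σ i : Fin n) : ℕ)) c + w i), w i) = ∑ i : Fin n, w i := by
        rw [hBdef]
        exact Finset.sum_filter_add_sum_filter_not _ _ _
      rw [hm] at hS1
      have hstep : (B.card + 1) * (n * (m + 1) + 1) ≤ p * (n * (m + 1) + 1) :=
        Nat.mul_le_mul_right _ hbp
      have hexp : (B.card + 1) * (n * (m + 1) + 1)
          = B.card * (n * (m + 1) + 1) + (n * (m + 1) + 1) := by ring
      have hcm : (n * (m + 1) + 1) * p = p * (n * (m + 1) + 1) := by ring
      have hd : n * (m + 1) = n * m + n := by ring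
      omega

lemma count_C (x : ℕ → ℕ) (hx : PartitionOn n x) (hpn : p ≤ n) (u : Fin n → ℕ)
    (S : Finset (Fin n)) (hS : S.card = p) (htop : ∀ i ∈ S, ∀ j, j ∉ S → u j ≤ u i)
    (σ : Equiv.Perm (Fin n)) (d : ℕ)
    (hdom : ∀ i : Fin n, x ((σ i : Fin n) : ℕ) ≤ d * (if i ∈ S then 1 else 0) + u i) :
    conj x (x p + 1) ≤ p ∧ (0 < x p → p < conj x (x p)) ∧
    ∀ v : ℕ, 1 ≤ v →
      (Finset.univ.filter fun j : Fin n => v ≤ min (x (j : ℕ)) (x p)).card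
        ≤ (Finset.univ.filter fun i : Fin n => v ≤ u i).card := by
  classical
  refine ⟨?_, ?_, ?_⟩
  · rw [conj]
    have hsub : { j : ℕ | x p + 1 ≤ x j } ⊆ ↑(Finset.range p) := by
      intro j hj
      simp only [Set.mem_setOf_eq] at hj
      simp only [Finset.coe_range, Set.mem_Iio]
      by_contra hge
      push_neg at hge
      have := hx.1 p j hge
      omega
    calc ({ j : ℕ | x p + 1 ≤ x j }).ncard ≤ (↑(Finset.range p) : Set ℕ).ncard :=
        Set.ncard_le_ncard hsub (Finset.finite_toSet _)
      _ = p := by rw [Set.ncard_coe_finset, Finset.card_range]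
  · intro hpos
    rw [conj]
    have hsub1 : (↑(Finset.range (p + 1)) : Set ℕ) ⊆ { j : ℕ | x p ≤ x j } := by
      intro j hj
      simp only [Finset.coe_range, Set.mem_Iio] at hj
      simp only [Set.mem_setOf_eq]
      exact hx.1 j p (by omega)
    have hsub2 : { j : ℕ | x p ≤ x j } ⊆ ↑(Finset.range n) := by
      intro j hj
      simp only [Set.mem_setOf_eq] at hj
      simp only [Finset.coe_range, Set.mem_Iio]
      by_contra hge
      push_neg at hge
      rw [hx.2 j hge] at hj
      omega
    have := Set.ncard_le_ncard hsub1
      (Set.Finite.subset (Finset.finite_toSet _) hsub2)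
    rw [Set.ncard_coe_finset, Finset.card_range] at this
    omega
  · intro v hv
    by_cases hvc : v ≤ x p
    · have hpn' : p < n := by
        by_contra hge
        push_neg at hge
        rw [hx.2 p hge] at hvc
        omega
      have hLHS : (Finset.univ.filter fun j : Fin n => v ≤ min (x (j : ℕ)) (x p))
          = Finset.univ.filter fun j : Fin n => v ≤ x (j : ℕ) := by
        ext j
        simp only [Finset.mem_filter, Finset.mem_univ, true_and, le_min_iff]
        omega
      rw [hLHS]
      by_cases hcase : ∀ i ∈ S, v ≤ u i
      · rw [← card_filter_perm σ (fun j : Fin n => v ≤ x (j : ℕ))]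
        refine Finset.card_le_card ?_
        intro i hi
        simp only [Finset.mem_filter, Finset.mem_univ, true_and] at hi ⊢
        by_cases hiS : i ∈ S
        · exact hcase i hiS
        · have := hdom i
          rw [if_neg hiS] at this
          omega
      · push_neg at hcase
        obtain ⟨i₀, hi₀, hlt⟩ := hcase
        exfalso
        have hge : p + 1 ≤ (Finset.univ.filter fun j : Fin n => v ≤ x (j : ℕ)).card := by
          have hsub : (Finset.univ.filter fun j : Fin n => (j : ℕ) ≤ p)
              ⊆ Finset.univ.filter fun j : Fin n => v ≤ x (j : ℕ) := by
            intro j hj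
            simp only [Finset.mem_filter, Finset.mem_univ, true_and] at hj ⊢
            exact le_trans hvc (hx.1 (j : ℕ) p hj)
          refine le_trans ?_ (Finset.card_le_card hsub)
          rw [card_filter_fin (fun m => m ≤ p)]
          have : ((Finset.range n).filter fun m => m ≤ p) = Finset.range (p + 1) := by
            ext m
            simp only [Finset.mem_filter, Finset.mem_range]
            omega
          rw [this, Finset.card_range]
        have hsub2 : (Finset.univ.filter fun i : Fin n => v ≤ x ((σ i : Fin n) : ℕ)) ⊆ S := by
          intro i hi
          simp only [Finset.mem_filter, Finset.mem_univ, true_and] at hi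
          by_contra hiS
          have hd := hdom i
          rw [if_neg hiS] at hd
          have := htop i₀ hi₀ i hiS
          omega
        have := Finset.card_le_card hsub2
        rw [card_filter_perm σ (fun j : Fin n => v ≤ x (j : ℕ)), hS] at this
        omega
    · have hempty : (Finset.univ.filter fun j : Fin n => v ≤ min (x (j : ℕ)) (x p)) = ∅ := by
        refine Finset.filter_eq_empty_iff.mpr fun j _ => ?_
        simp only [le_min_iff]
        omega
      rw [hempty]
      simp

/-- existence of a "top p" subset -/
lemma exists_top_set (hpn : p ≤ n) (u : Fin n → ℕ) :
    ∃ S : Finset (Fin n), S.card = p ∧ ∀ i ∈ S, ∀ j, j ∉ S → u j ≤ u i := by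
  classical
  induction p with
  | zero => exact ⟨∅, rfl, fun i hi => absurd hi (Finset.notMem_empty i)⟩
  | succ q ih =>
    obtain ⟨S, hcard, htop⟩ := ih (by omega)
    have hne : (Finset.univ \ S).Nonempty := by
      rw [← Finset.card_pos, Finset.card_sdiff_of_subset (Finset.subset_univ S)]
      simp only [Finset.card_univ, Fintype.card_fin]
      omega
    obtain ⟨i₀, hi₀, hmax⟩ := Finset.exists_max_image (Finset.univ \ S) u hne
    have hi₀S : i₀ ∉ S := (Finset.mem_sdiff.mp hi₀).2
    refine ⟨insert i₀ S, ?_, ?_⟩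
    · rw [Finset.card_insert_of_notMem hi₀S, hcard]
    · intro i hi j hj
      have hjS : j ∉ S := fun h => hj (Finset.mem_insert_of_mem h)
      rcases Finset.mem_insert.mp hi with rfl | hiS
      · exact hmax j (Finset.mem_sdiff.mpr ⟨Finset.mem_univ j, hjS⟩)
      · exact htop i hiS j hjS

end Aux5
theorem stmt_1 {k : Type*} [Field k] (n p : ℕ) (hp : 1 ≤ p) (hpn : p ≤ n)
    (Xs : Set (ℕ → ℕ)) (hXs : ∀ x ∈ Xs, PartitionOn n x) :
    (⨆ d : ℕ, Submodule.colon (IXset k n Xs) ((Ipart k n (rect p 1) ^ d : Ideal (MvPolynomial (Fin n) k)) : Set (MvPolynomial (Fin n) k))) =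
      IXset k n
        { y | ∃ x ∈ Xs, ∃ c : ℕ, conj x (c + 1) ≤ p ∧ (0 < c → p < conj x c) ∧
          y = trunc x c } := by
  classical
  apply le_antisymm
  · refine iSup_le fun d => ?_
    intro f hf
    rw [mem_IXset_iff]
    intro u hu
    obtain ⟨S, hScard, htop⟩ := exists_top_set hpn (fun i => u i)
    obtain ⟨τ, hτ⟩ := exists_perm_indicator hpn S hScard
    set ind : Fin n → ℕ := fun i => if i ∈ S then 1 else 0 with hind
    have hgen : Mf k n ind ∈ Ipart k n (rect p 1) := by
      refine Ideal.subset_span ⟨τ, ?_⟩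
      rw [prodX_eq]
      congr 1
      funext i
      rw [hind]
      simp only [rect]
      by_cases h : i ∈ S
      · rw [if_pos ((hτ i).mpr h), if_pos h]
      · rw [if_neg (fun hh => h ((hτ i).mp hh)), if_neg h]
    have hpow : Mf k n (fun i => d * ind i) ∈ Ipart k n (rect p 1) ^ d := by
      rw [← Mf_pow]
      exact Ideal.pow_mem_pow hgen d
    have hmul : Mf k n (fun i => d * ind i) * f ∈ IXset k n Xs := by
      have := Submodule.mem_colon.mp hf _ hpow
      rwa [smul_eq_mul, mul_comm] at this
    have hsupp : (Finsupp.equivFunOnFinite.symm (fun i => d * ind i) + u)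
        ∈ (Mf k n (fun i => d * ind i) * f).support := by
      rw [MvPolynomial.mem_support_iff, Mf, MvPolynomial.coeff_monomial_mul, one_mul]
      exact MvPolynomial.mem_support_iff.mp hu
    rw [mem_IXset_iff] at hmul
    obtain ⟨x, hxX, σ, hσ⟩ := hmul _ hsupp
    have hdom : ∀ i : Fin n, x ((σ i : Fin n) : ℕ) ≤ d * (if i ∈ S then 1 else 0) + u i := by
      intro i
      have h' := hσ i
      simpa [hind] using h'
    obtain ⟨hc1, hc2, hc3⟩ := count_C x (hXs x hxX) hpn (fun i => u i) S hScard htop σ d hdom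
    refine ⟨trunc x (x p), ⟨x, hxX, x p, hc1, hc2, rfl⟩, ?_⟩
    exact exists_perm_le (trunc x (x p))
      (fun i j hij => min_le_min ((hXs x hxX).1 i j hij) le_rfl) (fun i => u i) hc3
  · refine iSup₂_le fun y hy => ?_
    obtain ⟨x, hxX, c, hc1, _, rfl⟩ := hy
    refine le_trans ?_ (le_iSup (fun d => Submodule.colon (IXset k n Xs)
      ((Ipart k n (rect p 1) ^ d : Ideal (MvPolynomial (Fin n) k)) : Set (MvPolynomial (Fin n) k))) (n * x 0 + 1))
    rw [Ipart, Ideal.span_le]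
    rintro g ⟨σ, rfl⟩
    rw [SetLike.mem_coe, Submodule.mem_colon]
    intro h hh
    have hh' := pow_rect_le_span hpn (n * x 0 + 1) hh
    clear hh
    rw [smul_eq_mul]
    induction hh' using Submodule.span_induction with
    | mem m hm =>
      obtain ⟨w, hw, rfl⟩ := hm
      rw [prodX_eq, Mf_mul]
      refine Ipart_le_IXset Xs x hxX (mem_Ipart_of_le x _ ?_)
      exact exists_perm_le x (hXs x hxX).1
        (fun i => trunc x c ((σ i : Fin n) : ℕ) + w i)
        (fun v hv => count_B x (hXs x hxX) c hc1 w hw σ v hv)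
    | zero =>
      rw [mul_zero]
      exact Ideal.zero_mem _
    | add a b ha hb iha ihb =>
      rw [mul_add]
      exact Ideal.add_mem _ iha ihb
    | smul a m hm ihm =>
      rw [smul_eq_mul, mul_left_comm]
      exact Ideal.mul_mem_left _ a ihm
end

section
/- Let Y ⊆ P_n, 0 ≤ l < n, and z ∈ P_n with z_1 = ⋯ = z_{l+1}. If (z,l) ∈ Z(Y), then I_Y ⊆ I_{Y_{z,l}}. -/
open MvPolynomial

lemma card_filter_lt_fin (n a : ℕ) (ha : a ≤ n) :
    (Finset.univ.filter fun i : Fin n => (i : ℕ) < a).card = a := by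
  rw [← Finset.card_range a]
  apply Finset.card_bij (fun (i : Fin n) _ => (i : ℕ))
  · intro i hi
    simp only [Finset.mem_filter] at hi
    simpa using hi.2
  · intro i hi j hj h
    exact Fin.ext h
  · intro j hj
    simp only [Finset.mem_range] at hj
    exact ⟨⟨j, lt_of_lt_of_le hj ha⟩, by simp [hj], rfl⟩

lemma exists_perm_maps (n : ℕ) (S T : Finset (Fin n)) (h : S.card = T.card) :
    ∃ σ : Equiv.Perm (Fin n), ∀ i, i ∈ S ↔ σ i ∈ T := by
  have h1 : Fintype.card {i : Fin n // i ∈ S} = Fintype.card {i : Fin n // i ∈ T} := by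
    simpa [Fintype.card_coe] using h
  have h2 : Fintype.card {i : Fin n // ¬ i ∈ S} = Fintype.card {i : Fin n // ¬ i ∈ T} := by
    rw [Fintype.card_subtype_compl, Fintype.card_subtype_compl, h1]
  classical
  let e1 : {i : Fin n // i ∈ S} ≃ {i : Fin n // i ∈ T} := Fintype.equivOfCardEq h1
  let e2 : {i : Fin n // ¬ i ∈ S} ≃ {i : Fin n // ¬ i ∈ T} := Fintype.equivOfCardEq h2
  refine ⟨(Equiv.sumCompl (· ∈ S)).symm.trans ((Equiv.sumCongr e1 e2).trans
    (Equiv.sumCompl (· ∈ T))), fun i => ?_⟩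
  by_cases hi : i ∈ S
  · simp only [Equiv.trans_apply, Equiv.sumCompl_symm_apply_of_pos hi,
      Equiv.sumCongr_apply, Sum.map_inl, Equiv.sumCompl_apply_inl]
    exact ⟨fun _ => (e1 ⟨i, hi⟩).2, fun _ => hi⟩
  · simp only [Equiv.trans_apply, Equiv.sumCompl_symm_apply_of_neg hi,
      Equiv.sumCongr_apply, Sum.map_inr, Equiv.sumCompl_apply_inr]
    exact ⟨fun h' => absurd h' hi, fun h' => absurd h' (e2 ⟨i, hi⟩).2⟩

lemma mem_Ipart_rect (k : Type*) [Field k] (n a b : ℕ) (u : Fin n → ℕ)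
    (hcard : a ≤ (Finset.univ.filter fun i : Fin n => b ≤ u i).card) :
    (∏ i : Fin n, (X i : MvPolynomial (Fin n) k) ^ u i) ∈ Ipart k n (rect a b) := by
  classical
  have ha : a ≤ n := le_trans hcard (le_trans (Finset.card_filter_le _ _) (by simp))
  obtain ⟨S, hSsub, hScard⟩ := Finset.exists_subset_card_eq hcard
  obtain ⟨σ, hσ⟩ := exists_perm_maps n S (Finset.univ.filter fun i : Fin n => (i : ℕ) < a)
    (hScard.trans (card_filter_lt_fin n a ha).symm)
  have hσ' : ∀ i, i ∈ S ↔ ((σ i : Fin n) : ℕ) < a := by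
    intro i; rw [hσ i]; simp
  have hle : ∀ i : Fin n, rect a b ((σ i : Fin n) : ℕ) ≤ u i := by
    intro i
    by_cases hi : i ∈ S
    · have : ((σ i : Fin n) : ℕ) < a := (hσ' i).1 hi
      have hb : b ≤ u i := by
        have := hSsub hi
        simpa using this
      simpa [rect, this] using hb
    · have : ¬ ((σ i : Fin n) : ℕ) < a := fun h => hi ((hσ' i).2 h)
      simp [rect, this]
  have hgen : (∏ i : Fin n, (X i : MvPolynomial (Fin n) k) ^ rect a b ((σ i : Fin n) : ℕ))
      ∈ Ipart k n (rect a b) := Ideal.subset_span ⟨σ, rfl⟩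
  have heq : (∏ i : Fin n, (X i : MvPolynomial (Fin n) k) ^ u i) =
      (∏ i : Fin n, (X i : MvPolynomial (Fin n) k) ^ rect a b ((σ i : Fin n) : ℕ)) *
      (∏ i : Fin n, (X i : MvPolynomial (Fin n) k) ^ (u i - rect a b ((σ i : Fin n) : ℕ))) := by
    rw [← Finset.prod_mul_distrib]
    apply Finset.prod_congr rfl
    intro i _
    rw [← pow_add, Nat.add_sub_cancel' (hle i)]
  rw [heq]
  exact Ideal.mul_mem_right _ _ hgen

lemma conj_le_of_lt (n : ℕ) (y : ℕ → ℕ) (hy : PartitionOn n y) (m t : ℕ)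
    (h : y t < m) : conj y m ≤ t := by
  have hsub : { j : ℕ | m ≤ y j } ⊆ Set.Iio t := by
    intro j hj
    simp only [Set.mem_setOf_eq] at hj
    simp only [Set.mem_Iio]
    by_contra hjt
    push_neg at hjt
    have := hy.1 t j hjt
    omega
  calc conj y m ≤ (Set.Iio t).ncard := Set.ncard_le_ncard hsub (Set.finite_Iio t)
    _ = t := by rw [← Finset.coe_range, Set.ncard_coe_finset, Finset.card_range]

theorem stmt_4 {k : Type*} [Field k] (n l : ℕ) (hl : l < n)
    (z : ℕ → ℕ) (hz : PartitionOn n z) (hzflat : ∀ i ≤ l, z i = z 0)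
    (Y : Set (ℕ → ℕ)) (hY : ∀ y ∈ Y, PartitionOn n y)
    (hzl : (z, l) ∈ ZX n Y) :
    IXset k n Y ≤ IXset k n (Yset n z l) := by
  classical
  have hall : ∀ x ∈ Y, trunc x (z 0) ≤ z → conj x (z 0 + 1) ≤ l + 1 →
      conj x (z 0 + 1) = l + 1 := hzl.2.2
  simp only [IXset]
  refine iSup₂_le fun y hy => ?_
  have hypart := hY y hy
  rw [Ipart, Ideal.span_le]
  rintro f ⟨σ, rfl⟩
  -- find the rectangle (a, b) that works for y
  have key : ∃ a b : ℕ, a ≤ n ∧ rect a b ∈ Yset n z l ∧ ∀ t, t < a → b ≤ y t := by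
    by_cases hcase : l + 1 ≤ conj y (z 0 + 1)
    · refine ⟨l + 1, z 0 + 1, hl, Or.inl rfl, fun t ht => ?_⟩
      by_contra hcon
      push_neg at hcon
      have := conj_le_of_lt n y hypart (z 0 + 1) t (by omega)
      omega
    · push_neg at hcase
      have hntr : ¬ trunc y (z 0) ≤ z := by
        intro htr
        have := hall y hy htr (by omega)
        omega
      have hi0 : ∃ i, z i < min (y i) (z 0) := by
        by_contra hcon
        push_neg at hcon
        exact hntr fun i => hcon i
      obtain ⟨i, hi⟩ := hi0
      have hyi : z i < y i := lt_of_lt_of_le hi (min_le_left _ _)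
      have hzi : z i < z 0 := lt_of_lt_of_le hi (min_le_right _ _)
      have hil : l < i := by
        by_contra hcon
        push_neg at hcon
        rw [hzflat i hcon] at hzi
        omega
      have hin : i < n := by
        by_contra hcon
        push_neg at hcon
        rw [hypart.2 i hcon] at hyi
        omega
      -- minimal j with z j ≤ z i
      have hPi : ∃ j, z j ≤ z i := ⟨i, le_refl _⟩
      set j := Nat.find hPi with hjdef
      have hj : z j ≤ z i := Nat.find_spec hPi
      have hjle : j ≤ i := Nat.find_le (le_refl _)
      have hjeq : z j = z i := le_antisymm hj (hz.1 j i hjle)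
      have hjl : l < j := by
        by_contra hcon
        push_neg at hcon
        have := hzflat j hcon
        omega
      have hmin : z i < z (j - 1) := by
        have := Nat.find_min hPi (show j - 1 < j by omega)
        omega
      clear_value j
      obtain ⟨m, rfl⟩ : ∃ m, j = m + 1 := ⟨j - 1, by omega⟩
      simp only [Nat.add_sub_cancel] at hmin
      refine ⟨m + 2, z (m + 1) + 1, by omega, Or.inr ⟨m, by omega, by omega,
        by rw [hjeq]; exact hmin, rfl⟩, fun t ht => ?_⟩
      have : y i ≤ y t := hypart.1 t i (by omega)
      rw [hjeq]
      omega
  obtain ⟨a, b, han, hmem, hcoord⟩ := key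
  have hcard : a ≤ (Finset.univ.filter fun i : Fin n => b ≤ y ((σ i : Fin n) : ℕ)).card := by
    have hsub : (Finset.univ.filter fun i : Fin n => (i : ℕ) < a).image σ.symm ⊆
        Finset.univ.filter fun i : Fin n => b ≤ y ((σ i : Fin n) : ℕ) := by
      intro i hi
      simp only [Finset.mem_image, Finset.mem_filter, Finset.mem_univ, true_and] at hi ⊢
      obtain ⟨p, hp, rfl⟩ := hi
      rw [Equiv.apply_symm_apply]
      exact hcoord _ hp
    calc a = (Finset.univ.filter fun i : Fin n => (i : ℕ) < a).card :=
          (card_filter_lt_fin n a han).symm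
      _ = ((Finset.univ.filter fun i : Fin n => (i : ℕ) < a).image σ.symm).card :=
          (Finset.card_image_of_injective _ σ.symm.injective).symm
      _ ≤ _ := Finset.card_le_card hsub
  have hfin := mem_Ipart_rect k n a b (fun i : Fin n => y ((σ i : Fin n) : ℕ)) hcard
  have hle : Ipart k n (rect a b) ≤ IXset k n (Yset n z l) :=
    le_iSup₂_of_le (rect a b) hmem le_rfl
  exact hle hfin
end

section
/- Let 0 ≤ l < n and z ∈ P_n with z_1 = ⋯ = z_{l+1}. If (y,u) ∈ Z(Y_{z,l} ∪ {z}), then u ≥ l. -/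
open MvPolynomial

lemma conj_rect_of_le (a b i : ℕ) (hi : 0 < i) (h : i ≤ b) : conj (rect a b) i = a := by
  unfold conj rect
  have : {j : ℕ | i ≤ if j < a then b else 0} = ↑(Finset.range a) := by
    ext j
    simp only [Finset.coe_range, Set.mem_setOf_eq, Set.mem_Iio]
    split <;> omega
  rw [this, Set.ncard_coe_finset, Finset.card_range]

lemma conj_rect_of_gt (a b i : ℕ) (h : b < i) : conj (rect a b) i = 0 := by
  unfold conj rect
  have : {j : ℕ | i ≤ if j < a then b else 0} = ∅ := by
    ext j; simp only [Set.mem_setOf_eq, Set.mem_empty_iff_false, iff_false]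
    split <;> omega
  rw [this, Set.ncard_empty]

lemma conj_of_gt_first (z : ℕ → ℕ) (i : ℕ) (hdec : ∀ a b : ℕ, a ≤ b → z b ≤ z a)
    (h : z 0 < i) : conj z i = 0 := by
  unfold conj
  have : {j : ℕ | i ≤ z j} = ∅ := by
    ext j; simp only [Set.mem_setOf_eq, Set.mem_empty_iff_false, iff_false]
    have := hdec 0 j (Nat.zero_le j); omega
  rw [this, Set.ncard_empty]

theorem stmt_8 (n l : ℕ) (hl : l < n) (z : ℕ → ℕ) (hz : PartitionOn n z)
    (hzflat : ∀ i ≤ l, z i = z 0) :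
    ∀ yu ∈ ZX n (Yset n z l ∪ {z}), l ≤ yu.2 := by
  rintro ⟨y, u⟩ ⟨hy, ⟨x, hx, hx1, hx2⟩, hall⟩
  have heq : conj x (y 0 + 1) = u + 1 := hall x hx hx1 hx2
  rcases hx with (hx | ⟨m, hm1, hm2, hm3, rfl⟩) | hx
  · -- x = rect (l+1) (z 0 + 1)
    rw [Set.mem_singleton_iff] at hx
    rw [hx] at heq
    by_cases hc : y 0 + 1 ≤ z 0 + 1
    · rw [conj_rect_of_le _ _ _ (Nat.succ_pos _) hc] at heq; omega
    · rw [conj_rect_of_gt _ _ _ (by omega)] at heq; omega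
  · -- x = rect (m+2) (z (m+1) + 1)
    by_cases hc : y 0 + 1 ≤ z (m+1) + 1
    · rw [conj_rect_of_le _ _ _ (Nat.succ_pos _) hc] at heq; omega
    · rw [conj_rect_of_gt _ _ _ (by omega)] at heq; omega
  · -- x = z
    rw [Set.mem_singleton_iff] at hx
    rw [hx] at heq
    by_cases hc : y 0 + 1 ≤ z 0
    · -- conj z (y 0 + 1) ≥ l + 1
      have hsub : ↑(Finset.range (l+1)) ⊆ {j : ℕ | y 0 + 1 ≤ z j} := by
        intro j hj
        simp only [Finset.coe_range, Set.mem_Iio] at hj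
        simp only [Set.mem_setOf_eq]
        rw [hzflat j (by omega)]; exact hc
      have hfin : {j : ℕ | y 0 + 1 ≤ z j}.Finite := by
        apply Set.Finite.subset (Set.finite_Iio n)
        intro j hj
        simp only [Set.mem_setOf_eq] at hj
        simp only [Set.mem_Iio]
        by_contra h
        rw [hz.2 j (by omega)] at hj; omega
      have := Set.ncard_le_ncard hsub hfin
      rw [Set.ncard_coe_finset, Finset.card_range] at this
      unfold conj at heq; omega
    · rw [conj_of_gt_first z _ hz.1 (by omega)] at heq; omega
end

section
/- Let 0 ≤ l < n and z ∈ P_n with z_1 = ⋯ = z_{l+1} = c. For u ∈ ℤ^n_{≥0}, let x be the weakly decreasing rearrangement of u. Then the monomial e^u lies in I_z but does not lie in I_{succ(z,l)} if and only if x_i = z_i for all i ≥ l+1 and x_i ≥ c for all 1 ≤ i ≤ l. -/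
open MvPolynomial

open MvPolynomial in
lemma prod_pow_eq_mono {k : Type*} [Field k] (n : ℕ) (g : Fin n → ℕ) :
    (∏ i : Fin n, (X i : MvPolynomial (Fin n) k) ^ g i) =
      monomial (Finsupp.equivFunOnFinite.symm g) (1 : k) := by
  rw [← prod_X_pow_eq_monomial]
  symm
  apply Finset.prod_subset (Finset.subset_univ _)
  intro i _ hi
  rw [Finsupp.notMem_support_iff.mp hi, pow_zero]

/-- generating exponent set of `Ipart`. -/
def genSet (n : ℕ) (z : ℕ → ℕ) : Set (Fin n →₀ ℕ) :=
  { s | ∃ σ : Equiv.Perm (Fin n), s = Finsupp.equivFunOnFinite.symm (fun i => z ((σ i : Fin n) : ℕ)) }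

open MvPolynomial in
lemma Ipart_eq_span {k : Type*} [Field k] (n : ℕ) (z : ℕ → ℕ) :
    Ipart k n z = Ideal.span ((fun s => monomial s (1 : k)) '' genSet n z) := by
  unfold Ipart genSet
  congr 1
  ext f
  constructor
  · rintro ⟨σ, rfl⟩
    exact ⟨_, ⟨σ, rfl⟩, (prod_pow_eq_mono n _).symm⟩
  · rintro ⟨s, ⟨σ, rfl⟩, rfl⟩
    exact ⟨σ, (prod_pow_eq_mono n _).symm⟩

open MvPolynomial in
lemma mon_eq_monomial {k : Type*} [Field k] (n : ℕ) (u : ℕ → ℕ) :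
    mon k n u = monomial (Finsupp.equivFunOnFinite.symm (fun i : Fin n => u i)) (1 : k) :=
  prod_pow_eq_mono n _


open MvPolynomial in
lemma mem_span_mono_iff {k : Type*} [Field k] (n : ℕ) (u : ℕ → ℕ) (T : Set (Fin n →₀ ℕ)) :
    mon k n u ∈ Ideal.span ((fun s => monomial s (1 : k)) '' T) ↔
      ∃ s ∈ T, ∀ i : Fin n, s i ≤ u i := by
  classical
  rw [mon_eq_monomial, mem_ideal_span_monomial_image]
  have h1 : (1 : k) ≠ 0 := one_ne_zero
  rw [support_monomial, if_neg h1]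
  simp only [Finset.mem_singleton, forall_eq]
  constructor
  · rintro ⟨s, hs, hle⟩
    exact ⟨s, hs, fun i => hle i⟩
  · rintro ⟨s, hs, hle⟩
    exact ⟨s, hs, fun i => hle i⟩

open MvPolynomial in
lemma mem_Ipart_iff {k : Type*} [Field k] (n : ℕ) (z u : ℕ → ℕ) :
    mon k n u ∈ Ipart k n z ↔
      ∃ τ : Equiv.Perm (Fin n), ∀ i : Fin n, z ((τ i : Fin n) : ℕ) ≤ u i := by
  rw [Ipart_eq_span, mem_span_mono_iff]
  constructor
  · rintro ⟨s, ⟨τ, rfl⟩, hle⟩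
    exact ⟨τ, fun i => hle i⟩
  · rintro ⟨τ, hle⟩
    exact ⟨_, ⟨τ, rfl⟩, fun i => hle i⟩

open MvPolynomial in
lemma IXset_eq_span {k : Type*} [Field k] (n : ℕ) (Xs : Set (ℕ → ℕ)) :
    IXset k n Xs = Ideal.span ((fun s => monomial s (1 : k)) '' ⋃ y ∈ Xs, genSet n y) := by
  rw [Set.image_iUnion₂, Ideal.span, Submodule.span_iUnion₂, IXset]
  simp_rw [Ipart_eq_span]

open MvPolynomial in
lemma mem_IXset_iff_s9 {k : Type*} [Field k] (n : ℕ) (Xs : Set (ℕ → ℕ)) (u : ℕ → ℕ) :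
    mon k n u ∈ IXset k n Xs ↔ ∃ y ∈ Xs, mon k n u ∈ Ipart k n y := by
  rw [IXset_eq_span, mem_span_mono_iff]
  constructor
  · rintro ⟨s, hs, hle⟩
    simp only [Set.mem_iUnion] at hs
    obtain ⟨y, hy, hsy⟩ := hs
    refine ⟨y, hy, ?_⟩
    rw [Ipart_eq_span, mem_span_mono_iff]
    exact ⟨s, hsy, hle⟩
  · rintro ⟨y, hy, hmem⟩
    rw [Ipart_eq_span, mem_span_mono_iff] at hmem
    obtain ⟨s, hs, hle⟩ := hmem
    exact ⟨s, Set.mem_iUnion₂.mpr ⟨y, hy, hs⟩, hle⟩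

/-- Pigeonhole: if some permutation of the partition `z` is dominated by the
partition `x`, then `z ≤ x` pointwise. -/
lemma perm_le_of_partition {n : ℕ} {z x : ℕ → ℕ}
    (hz : PartitionOn n z) (hx : ∀ i j : ℕ, i ≤ j → x j ≤ x i)
    (π : Equiv.Perm (Fin n)) (h : ∀ j : Fin n, z ((π j : Fin n) : ℕ) ≤ x (j : ℕ)) :
    ∀ i, i < n → z i ≤ x i := by
  intro i hi
  set ii : Fin n := ⟨i, hi⟩
  have key : ∃ j : Fin n, ii ≤ j ∧ π j ≤ ii := by
    by_contra hcon
    push_neg at hcon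
    have hsub : ∀ m : Fin n, m ∈ Finset.Iic ii → π.symm m ∈ Finset.Iio ii := by
      intro m hm
      rw [Finset.mem_Iic] at hm
      rw [Finset.mem_Iio]
      by_contra hge
      push_neg at hge
      have := hcon (π.symm m) hge
      rw [Equiv.apply_symm_apply] at this
      exact absurd hm (not_le.mpr this)
    have hinj : Set.InjOn (fun m => π.symm m) (Finset.Iic ii) :=
      fun a _ b _ hab => π.symm.injective hab
    have hcard := Finset.card_le_card_of_injOn _ hsub hinj
    rw [Fin.card_Iic, Fin.card_Iio] at hcard
    omega
  obtain ⟨j, hij, hji⟩ := key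
  calc z i ≤ z ((π j : Fin n) : ℕ) := hz.1 _ _ hji
    _ ≤ x (j : ℕ) := h j
    _ ≤ x i := hx _ _ hij

/-- membership in `Ipart` in terms of the sorted rearrangement. -/
lemma mem_Ipart_iff_le {k : Type*} [Field k] {n : ℕ} (z u x : ℕ → ℕ)
    (hz : PartitionOn n z) (hx : PartitionOn n x)
    (σ : Equiv.Perm (Fin n)) (hσ : ∀ i : Fin n, x (i : ℕ) = u ((σ i : Fin n) : ℕ)) :
    mon k n u ∈ Ipart k n z ↔ ∀ i, z i ≤ x i := by
  rw [mem_Ipart_iff]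
  constructor
  · rintro ⟨τ, hτ⟩
    have hπ : ∀ j : Fin n, z (((σ.trans τ) j : Fin n) : ℕ) ≤ x (j : ℕ) := by
      intro j
      rw [hσ j]
      exact hτ (σ j)
    intro i
    by_cases hi : i < n
    · exact perm_le_of_partition hz hx.1 (σ.trans τ) hπ i hi
    · rw [hz.2 i (le_of_not_gt hi)]; exact Nat.zero_le _
  · intro hle
    refine ⟨σ.symm, fun i => ?_⟩
    have := hσ (σ.symm i)
    rw [Equiv.apply_symm_apply] at this
    rw [← this]
    exact hle _

theorem stmt_9 {k : Type*} [Field k] (n l : ℕ) (hl : l < n)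
    (z : ℕ → ℕ) (hz : PartitionOn n z) (hzflat : ∀ i ≤ l, z i = z 0)
    (u : ℕ → ℕ) (hu : ∀ i, n ≤ i → u i = 0)
    (x : ℕ → ℕ) (hx : PartitionOn n x)
    (σ : Equiv.Perm (Fin n)) (hσ : ∀ i : Fin n, x (i : ℕ) = u ((σ i : Fin n) : ℕ)) :
    (mon k n u ∈ Ipart k n z ∧ mon k n u ∉ IXset k n (succSet n l z)) ↔
      (∀ i, l ≤ i → x i = z i) ∧ ∀ i < l, z 0 ≤ x i := by
  have c := z 0
  rw [mem_Ipart_iff_le z u x hz hx σ hσ, mem_IXset_iff_s9]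
  have hsucc : (∃ y ∈ succSet n l z, mon k n u ∈ Ipart k n y) ↔
      ∃ y ∈ succSet n l z, ∀ i, y i ≤ x i := by
    constructor
    · rintro ⟨y, hy, hm⟩
      exact ⟨y, hy, (mem_Ipart_iff_le y u x hy.1 hx σ hσ).mp hm⟩
    · rintro ⟨y, hy, hm⟩
      exact ⟨y, hy, (mem_Ipart_iff_le y u x hy.1 hx σ hσ).mpr hm⟩
  rw [hsucc]
  constructor
  · rintro ⟨hzx, hns⟩
    constructor
    · intro i hli
      by_contra hne
      have hlt : z i < x i := lt_of_le_of_ne (hzx i) (Ne.symm hne)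
      exact hns ⟨x, ⟨hx, hzx, i, hli, hlt⟩, fun j => le_refl _⟩
    · intro i hil
      calc z 0 = z i := (hzflat i (le_of_lt hil)).symm
        _ ≤ x i := hzx i
  · rintro ⟨heq, hge⟩
    have hzx : ∀ i, z i ≤ x i := by
      intro i
      rcases lt_or_ge i l with h | h
      · calc z i = z 0 := hzflat i (le_of_lt h)
          _ ≤ x i := hge i h
      · exact le_of_eq (heq i h).symm
    refine ⟨hzx, ?_⟩
    rintro ⟨y, ⟨hyp, hzy, i, hli, hlt⟩, hyx⟩
    have : y i ≤ x i := hyx i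
    rw [heq i hli] at this
    omega
end

section
/- Let r ≥ 1 and let X ⊆ P_n be a nonempty set of partitions with |x| = r for all x ∈ X. If the ideal I_X is symmetric shifted, then every (z,l) ∈ Z(X) satisfies |z| + l + 1 ≤ r. -/
open MvPolynomial

section Aux

open Finset

/-- Product of powers of variables as a single monomial. -/
lemma prod_X_pow_eq_mono {k : Type*} [Field k] {n : ℕ} (w : Fin n → ℕ) :
    (∏ i : Fin n, (X i : MvPolynomial (Fin n) k) ^ w i) =
      monomial (Finsupp.equivFunOnFinite.symm w) (1 : k) := by
  rw [← MvPolynomial.prod_X_pow_eq_monomial]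
  exact (Finset.prod_subset (Finset.subset_univ _) fun i _ hi => by
    have h0 : w i = 0 := Finsupp.notMem_support_iff.mp hi
    rw [h0, pow_zero]).symm

/-- Transfer a sum along a permutation relation `v j = x' (σ j)`. -/
lemma sum_range_comp_perm {n : ℕ} (x' v : ℕ → ℕ) (σ : Equiv.Perm (Fin n))
    (h : ∀ j : Fin n, v (j : ℕ) = x' ((σ j : Fin n) : ℕ)) (g : ℕ → ℕ) :
    ∑ j ∈ Finset.range n, g (x' j) = ∑ j ∈ Finset.range n, g (v j) := by
  rw [← Fin.sum_univ_eq_sum_range (fun j => g (x' j)) n,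
      ← Fin.sum_univ_eq_sum_range (fun j => g (v j)) n]
  have : ∀ j : Fin n, g (v (j : ℕ)) = g (x' ((σ j : Fin n) : ℕ)) := fun j => by rw [h j]
  rw [Finset.sum_congr rfl (fun j _ => this j)]
  exact (Equiv.sum_comp σ (fun j : Fin n => g ((j : ℕ) |> x'))).symm

/-- `conj` as a finset card over `range n`. -/
lemma conj_eq_card_s11 {n : ℕ} (x : ℕ → ℕ) (h0 : ∀ j, n ≤ j → x j = 0) (m : ℕ) (hm : 1 ≤ m) :
    conj x m = ((Finset.range n).filter fun j => m ≤ x j).card := by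
  unfold conj
  rw [← Set.ncard_coe_finset]
  congr 1
  ext j
  simp only [Set.mem_setOf_eq, Finset.coe_filter, Finset.mem_range]
  constructor
  · intro h
    refine ⟨?_, h⟩
    by_contra hn
    push_neg at hn
    have := h0 j hn
    omega
  · exact fun h => h.2

/-- Extraction: a monomial of degree `r` in `I_X` is, up to permutation, a member of `X`. -/
lemma exists_perm_of_mon_mem {k : Type*} [Field k] {n r : ℕ} {Xs : Set (ℕ → ℕ)}
    (hsize : ∀ x ∈ Xs, psize n x = r)
    (v : ℕ → ℕ) (hv : mon k n v ∈ IXset k n Xs)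
    (hvsum : ∑ j ∈ Finset.range n, v j = r) :
    ∃ x' ∈ Xs, ∃ σ : Equiv.Perm (Fin n), ∀ j : Fin n, v (j : ℕ) = x' ((σ j : Fin n) : ℕ) := by
  classical
  set D : Set (Fin n →₀ ℕ) :=
    {d | ∃ x ∈ Xs, ∃ σ : Equiv.Perm (Fin n),
      d = Finsupp.equivFunOnFinite.symm fun i : Fin n => x ((σ i : Fin n) : ℕ)} with hD
  have hIX : IXset k n Xs = Ideal.span ((fun s => monomial s (1 : k)) '' D) := by
    unfold IXset Ipart Ideal.span
    rw [← Submodule.span_iUnion₂]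
    congr 1
    ext f
    simp only [Set.mem_iUnion, Set.mem_setOf_eq, Set.mem_image, hD]
    constructor
    · rintro ⟨x, hx, σ, rfl⟩
      exact ⟨_, ⟨x, hx, σ, rfl⟩, (prod_X_pow_eq_mono _).symm⟩
    · rintro ⟨d, ⟨x, hx, σ, rfl⟩, rfl⟩
      exact ⟨x, hx, σ, (prod_X_pow_eq_mono _).symm⟩
  rw [hIX] at hv
  have hmv : mon k n v = monomial (Finsupp.equivFunOnFinite.symm fun i : Fin n => v (i : ℕ))
      (1 : k) := prod_X_pow_eq_mono _
  rw [hmv, MvPolynomial.mem_ideal_span_monomial_image] at hv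
  have hsupp : (monomial (Finsupp.equivFunOnFinite.symm fun i : Fin n => v (i : ℕ))
      (1 : k)).support = {Finsupp.equivFunOnFinite.symm fun i : Fin n => v (i : ℕ)} := by
    rw [MvPolynomial.support_monomial, if_neg one_ne_zero]
  obtain ⟨d, hdD, hdle⟩ := hv _ (by rw [hsupp]; exact Finset.mem_singleton_self _)
  obtain ⟨x, hx, σ, rfl⟩ := hdD
  refine ⟨x, hx, σ, ?_⟩
  have hle : ∀ j : Fin n, x ((σ j : Fin n) : ℕ) ≤ v (j : ℕ) := by
    intro j
    have := Finsupp.le_def.mp hdle j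
    simpa using this
  have hsum1 : ∑ j : Fin n, x ((σ j : Fin n) : ℕ) = r := by
    rw [Equiv.sum_comp σ (fun j : Fin n => x (j : ℕ))]
    rw [Fin.sum_univ_eq_sum_range (fun j => x j) n]
    exact hsize x hx
  have hsum2 : ∑ j : Fin n, v (j : ℕ) = r := by
    rw [Fin.sum_univ_eq_sum_range (fun j => v j) n]
    exact hvsum
  have := (Finset.sum_eq_sum_iff_of_le (fun j _ => hle j)).mp (by rw [hsum1, hsum2])
  exact fun j => ((this j (Finset.mem_univ j))).symm

end Aux

theorem stmt_11 {k : Type*} [Field k] (n r : ℕ) (hr : 1 ≤ r)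
    (Xs : Set (ℕ → ℕ)) (hne : Xs.Nonempty) (hXs : ∀ x ∈ Xs, PartitionOn n x)
    (hsize : ∀ x ∈ Xs, psize n x = r)
    (hshift : SymShifted k n (IXset k n Xs)) :
    ∀ zl ∈ ZX n Xs, psize n zl.1 + zl.2 + 1 ≤ r  := by
  classical
  rintro ⟨z, l⟩ ⟨hz, ⟨x0, hx0, hx0t, hx0c⟩, hall⟩
  simp only at hz hx0t hx0c hall ⊢
  set c := z 0 with hc
  -- the set of valid partitions and the quantity to minimize
  set V : Set (ℕ → ℕ) := {x | x ∈ Xs ∧ trunc x c ≤ z ∧ conj x (c + 1) ≤ l + 1} with hV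
  set F : (ℕ → ℕ) → ℕ := fun x => ∑ j ∈ Finset.range n, (x j - c) with hF
  have hVne : (F '' V).Nonempty := ⟨F x0, x0, ⟨hx0, hx0t, hx0c⟩, rfl⟩
  obtain ⟨x, hxV, hFx⟩ : ∃ x ∈ V, F x = sInf (F '' V) := by
    obtain ⟨x, hxV, h⟩ := Nat.sInf_mem hVne
    exact ⟨x, hxV, h⟩
  have hmin : ∀ y ∈ V, F x ≤ F y := fun y hy => by
    rw [hFx]; exact Nat.sInf_le ⟨y, hy, rfl⟩
  obtain ⟨hxX, hxt, hxc⟩ := hxV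
  have hxP : PartitionOn n x := hXs x hxX
  have hconj : conj x (c + 1) = l + 1 := hall x hxX hxt hxc
  have hxcard : ((Finset.range n).filter fun j => c + 1 ≤ x j).card = l + 1 := by
    rw [← conj_eq_card_s11 x hxP.2 (c + 1) (by omega)]; exact hconj
  have hx0ge : c + 1 ≤ x 0 := by
    have hpos : 0 < ((Finset.range n).filter fun j => c + 1 ≤ x j).card := by omega
    obtain ⟨t, ht⟩ := Finset.card_pos.mp hpos
    have := (Finset.mem_filter.mp ht).2
    exact le_trans this (hxP.1 0 t (Nat.zero_le t))
  have hFge : l + 1 ≤ F x := by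
    rw [← hxcard, Finset.card_filter]
    refine Finset.sum_le_sum fun j _ => ?_
    by_cases h : c + 1 ≤ x j <;> simp [h] <;> omega
  have hsplit : psize n x = (∑ j ∈ Finset.range n, min (x j) c) + F x := by
    rw [hF, ← Finset.sum_add_distrib]
    exact Finset.sum_congr rfl fun j _ => by omega
  by_contra hcon
  push_neg at hcon
  have hrle : r ≤ psize n z + l := by omega
  have hxr : psize n x = r := hsize x hxX
  have htr : (∑ j ∈ Finset.range n, min (x j) c) ≤ psize n z :=
    Finset.sum_le_sum fun j _ => hxt j
  -- find an index i where the truncation is strictly below z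
  have hex : ∃ i ∈ Finset.range n, min (x i) c < z i := by
    by_contra hno
    push_neg at hno
    have : psize n z ≤ ∑ j ∈ Finset.range n, min (x j) c :=
      Finset.sum_le_sum fun j hj => hno j hj
    omega
  obtain ⟨i, hiR, him⟩ := hex
  have hin : i < n := Finset.mem_range.mp hiR
  have hzi : z i ≤ c := hz.1 0 i (Nat.zero_le i)
  have hxi : x i < z i := by
    rcases le_total (x i) c with h | h
    · rwa [min_eq_left h] at him
    · rw [min_eq_right h] at him; omega
  have hi0 : 0 < i := by
    rcases Nat.eq_zero_or_pos i with h | h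
    · subst h
      rw [min_eq_right (by omega : c ≤ x 0)] at him
      omega
    · exact h
  have hxix0 : x i < x 0 := by omega
  -- apply shiftedness
  have hmonx : mon k n x ∈ IXset k n Xs := by
    have h1 : mon k n x ∈ Ipart k n x := by
      apply Ideal.subset_span
      exact ⟨1, by simp [mon]⟩
    have h2 : Ipart k n x ≤ IXset k n Xs := le_iSup₂ (f := fun y _ => Ipart k n y) x hxX
    exact h2 h1
  have hmonv := hshift x hxP hmonx i hi0 hin hxix0
  set v : ℕ → ℕ := fun t => if t = 0 then x 0 - 1 else if t = i then x i + 1 else x t with hvdef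
  have hvsum : ∑ j ∈ Finset.range n, v j = r := by
    have key : ∀ j ∈ Finset.range n,
        v j + (if j = 0 then 1 else 0) = x j + (if j = i then 1 else 0) := by
      intro j _
      rcases eq_or_ne j 0 with rfl | hj0
      · simp [hvdef]
        rw [if_neg (show ¬(0:ℕ) = i by omega)]
        omega
      · rcases eq_or_ne j i with rfl | hji
        · simp [hvdef, hj0]
        · simp [hvdef, hj0, hji]
    have hsum := Finset.sum_congr rfl key
    rw [Finset.sum_add_distrib, Finset.sum_add_distrib] at hsum
    rw [Finset.sum_ite_eq' (Finset.range n) 0 (fun _ => 1),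
        Finset.sum_ite_eq' (Finset.range n) i (fun _ => 1)] at hsum
    rw [if_pos (Finset.mem_range.mpr (by omega)), if_pos hiR] at hsum
    have hxr' : (∑ j ∈ Finset.range n, x j) = r := hxr
    omega
  obtain ⟨x', hx', σ, hvs⟩ := exists_perm_of_mon_mem hsize v hmonv hvsum
  have hx'P : PartitionOn n x' := hXs x' hx'
  -- count transfer facts
  have hcount : ∀ m, ((Finset.range n).filter fun j => m ≤ x' j).card =
      ((Finset.range n).filter fun j => m ≤ v j).card := by
    intro m
    rw [Finset.card_filter, Finset.card_filter]
    exact sum_range_comp_perm x' v σ hvs (fun a => if m ≤ a then 1 else 0)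
  -- membership of x' in V
  have hvz : ∀ m, 1 ≤ m → m ≤ c → ∀ t, t < n → m ≤ v t → m ≤ z t := by
    intro m hm1 hmc t htn hmv
    rcases eq_or_ne t 0 with rfl | ht0
    · omega
    · rcases eq_or_ne t i with rfl | hti
      · simp [hvdef, ht0] at hmv
        omega
      · simp [hvdef, ht0, hti] at hmv
        have := hxt t
        simp only [trunc] at this
        omega
  have hx't : trunc x' c ≤ z := by
    intro j
    rcases lt_or_ge j n with hjn | hjn
    · by_contra hcontra
      push_neg at hcontra
      simp only [trunc] at hcontra
      set m := z j + 1 with hm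
      have hm1 : 1 ≤ m := by omega
      have hmx' : m ≤ x' j := by omega
      have hmc : m ≤ c := by omega
      have h1 : j + 1 ≤ ((Finset.range n).filter fun t => m ≤ x' t).card := by
        rw [← Finset.card_range (j + 1)]
        apply Finset.card_le_card
        intro t ht
        rw [Finset.mem_range] at ht
        refine Finset.mem_filter.mpr ⟨Finset.mem_range.mpr (by omega), ?_⟩
        exact le_trans hmx' (hx'P.1 t j (by omega))
      have h2 : ((Finset.range n).filter fun t => m ≤ z t).card ≤ j := by
        rw [← Finset.card_range j]
        apply Finset.card_le_card
        intro t ht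
        obtain ⟨_, hmz⟩ := Finset.mem_filter.mp ht
        rw [Finset.mem_range]
        by_contra hjt
        push_neg at hjt
        have := hz.1 j t hjt
        omega
      have h3 : ((Finset.range n).filter fun t => m ≤ v t).card ≤
          ((Finset.range n).filter fun t => m ≤ z t).card := by
        apply Finset.card_le_card
        intro t ht
        obtain ⟨htr, hmv⟩ := Finset.mem_filter.mp ht
        exact Finset.mem_filter.mpr ⟨htr, hvz m hm1 hmc t (Finset.mem_range.mp htr) hmv⟩
      have h4 := hcount m
      omega
    · simp only [trunc, hx'P.2 j hjn]
      simp
  have hx'c : conj x' (c + 1) ≤ l + 1 := by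
    rw [conj_eq_card_s11 x' hx'P.2 (c + 1) (by omega), hcount (c + 1)]
    rw [← hxcard]
    apply Finset.card_le_card
    intro t ht
    obtain ⟨htr, hmv⟩ := Finset.mem_filter.mp ht
    refine Finset.mem_filter.mpr ⟨htr, ?_⟩
    rcases eq_or_ne t 0 with rfl | ht0
    · exact hx0ge
    · rcases eq_or_ne t i with rfl | hti
      · simp [hvdef, ht0] at hmv
        omega
      · simpa [hvdef, ht0, hti] using hmv
  -- F decreases, contradiction with minimality
  have hFx' : F x' = ∑ j ∈ Finset.range n, (v j - c) := by
    rw [hF]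
    exact sum_range_comp_perm x' v σ hvs (fun a => a - c)
  have hFv : (∑ j ∈ Finset.range n, (v j - c)) + 1 = F x := by
    rw [hF]
    have key : ∀ j ∈ Finset.range n,
        (v j - c) + (if j = 0 then 1 else 0) = x j - c := by
      intro j _
      rcases eq_or_ne j 0 with rfl | hj0
      · simp [hvdef]
        omega
      · rcases eq_or_ne j i with rfl | hji
        · simp [hvdef, hj0]
          omega
        · simp [hvdef, hj0, hji]
    have hsum := Finset.sum_congr rfl key
    rw [Finset.sum_add_distrib, Finset.sum_ite_eq' (Finset.range n) 0 (fun _ => 1),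
        if_pos (Finset.mem_range.mpr (by omega))] at hsum
    exact hsum
  have hminle := hmin x' ⟨hx', hx't, hx'c⟩
  omega
end
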